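/- Let G : ℂ^(n×m₁) × ℂ^(n×m₂) → ℂ^(n×(m₁m₂)) be the map sending (D,E) to the matrix G_{DE} whose column indexed by (j,k) is the circular convolution D^{(:,j)} ⊛ E^{(:,k)}. If n ≥ m₁m₂, then for almost all (D,E) (i.e., all pairs outside a set of Lebesgue measure zero), the matrix G_{DE} has full column rank m₁m₂. -/

import Mathlib

open MeasureTheory

/-- Circular convolution of two vectors in `ℂ^n`. -/
noncomputable def cconv {n : ℕ} (u v : Fin n → ℂ) : Fin n → ℂ :=
  fun i => ∑ j, u j * v (i - j)


lemma ae_of_ae_comp {α β : Type*} [MeasurableSpace α] [MeasurableSpace β]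
    {μ : Measure α} {ν : Measure β} (Φ : α ≃ᵐ β) (hΦ : MeasurePreserving Φ μ ν)
    {P : β → Prop} (hder : ∀ᵐ x ∂μ, P (Φ x)) : ∀ᵐ y ∂ν, P y := by
  rw [ae_iff] at hder ⊢
  obtain ⟨t, hsub, htm, ht0⟩ := exists_measurable_superset_of_null hder
  refine measure_mono_null (t := Φ.symm ⁻¹' t) (fun y hy => ?_) ?_
  · exact Set.mem_preimage.mpr (hsub (show ¬ P (Φ (Φ.symm y)) by simpa using hy))
  · rw [(hΦ.symm Φ).measure_preimage htm.nullMeasurableSet, ht0]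

lemma ae_eval_ne_zero_fin : ∀ (N : ℕ) (p : MvPolynomial (Fin N) ℂ), p ≠ 0 →
    ∀ᵐ x : Fin N → ℂ ∂volume, MvPolynomial.eval x p ≠ 0 := by
  intro N
  induction N with
  | zero =>
    intro p hp
    obtain ⟨c, rfl⟩ := MvPolynomial.C_surjective (Fin 0) p
    filter_upwards with x
    simpa using fun hc => hp (by simp [hc])
  | succ N IH =>
    intro p hp
    set q := MvPolynomial.finSuccEquiv ℂ N p with hq
    have hq0 : q ≠ 0 := fun h => hp ((map_eq_zero_iff _ (AlgEquiv.injective _)).mp h)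
    have hlc : q.leadingCoeff ≠ 0 := Polynomial.leadingCoeff_ne_zero.mpr hq0
    -- a.e. (y, then x)
    have key : ∀ᵐ z : ℂ × (Fin N → ℂ) ∂volume,
        MvPolynomial.eval (Fin.cons z.1 z.2) p ≠ 0 := by
      have hS : MeasurableSet {z : ℂ × (Fin N → ℂ) | MvPolynomial.eval (Fin.cons z.1 z.2) p = 0} := by
        have hc : Continuous fun z : ℂ × (Fin N → ℂ) => MvPolynomial.eval (Fin.cons z.1 z.2) p := by
          apply (MvPolynomial.continuous_eval p).comp
          refine continuous_pi fun i => ?_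
          refine Fin.cases ?_ ?_ i
          · simpa using continuous_fst
          · intro j; simp only [Fin.cons_succ]; exact (continuous_apply j).comp continuous_snd
        exact hc.measurable (measurableSet_singleton 0)
      rw [ae_iff]
      have hS' : MeasurableSet {w : (Fin N → ℂ) × ℂ | MvPolynomial.eval (Fin.cons w.2 w.1) p = 0} := by
        have : {w : (Fin N → ℂ) × ℂ | MvPolynomial.eval (Fin.cons w.2 w.1) p = 0}
            = Prod.swap ⁻¹' {z : ℂ × (Fin N → ℂ) | MvPolynomial.eval (Fin.cons z.1 z.2) p = 0} := rfl
        rw [this]; exact measurable_swap hS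
      have hnull : (volume : Measure ((Fin N → ℂ) × ℂ))
          {w : (Fin N → ℂ) × ℂ | MvPolynomial.eval (Fin.cons w.2 w.1) p = 0} = 0 := by
        rw [Measure.volume_eq_prod, Measure.measure_prod_null hS']
        filter_upwards [IH q.leadingCoeff hlc] with y hy
        have hmap : q.map (MvPolynomial.eval y) ≠ 0 := by
          intro hzero
          apply hy
          have h2 : MvPolynomial.eval y (q.coeff q.natDegree) = 0 := by
            rw [← Polynomial.coeff_map, hzero, Polynomial.coeff_zero]
          rw [Polynomial.leadingCoeff]
          exact h2
        refine measure_mono_null (fun x hx => ?_)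
          ((Polynomial.finite_setOf_isRoot hmap).measure_zero volume)
        simp only [Set.mem_preimage, Set.mem_setOf_eq] at hx ⊢
        rw [MvPolynomial.eval_eq_eval_mv_eval'] at hx
        exact hx
      have hswap : {z : ℂ × (Fin N → ℂ) | ¬ MvPolynomial.eval (Fin.cons z.1 z.2) p ≠ 0}
          = Prod.swap ⁻¹' {w : (Fin N → ℂ) × ℂ | MvPolynomial.eval (Fin.cons w.2 w.1) p = 0} := by
        ext z; simp [Prod.swap]
      rw [hswap, Measure.volume_eq_prod,
        ← Measure.map_apply measurable_swap hS', Measure.prod_swap]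
      rw [Measure.volume_eq_prod] at hnull
      exact hnull
    -- transfer along piFinSuccAbove
    refine ae_of_ae_comp (MeasurableEquiv.piFinSuccAbove (fun _ : Fin (N+1) => ℂ) 0).symm
      ((volume_preserving_piFinSuccAbove (fun _ : Fin (N+1) => ℂ) 0).symm _) ?_
    filter_upwards [key] with z hz
    have : (MeasurableEquiv.piFinSuccAbove (fun _ : Fin (N+1) => ℂ) 0).symm z
        = Fin.cons z.1 z.2 := by
      simp [MeasurableEquiv.piFinSuccAbove, Fin.insertNthEquiv, Fin.insertNth_zero]
    rw [this]; exact hz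

lemma ae_eval_ne_zero {ι : Type*} [Fintype ι] (p : MvPolynomial ι ℂ) (hp : p ≠ 0) :
    ∀ᵐ x : ι → ℂ ∂volume, MvPolynomial.eval x p ≠ 0 := by
  classical
  set e : Fin (Fintype.card ι) ≃ ι := (Fintype.equivFin ι).symm with he
  have hq : MvPolynomial.rename e.symm p ≠ 0 := fun h =>
    hp ((MvPolynomial.rename_injective _ e.symm.injective).eq_iff.mp (by simpa using h))
  refine ae_of_ae_comp (MeasurableEquiv.piCongrLeft (fun _ : ι => ℂ) e)
    (volume_measurePreserving_piCongrLeft (fun _ : ι => ℂ) e) ?_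
  filter_upwards [ae_eval_ne_zero_fin _ _ hq] with x hx
  intro hcon
  apply hx
  rw [MvPolynomial.eval_rename]
  have : (x ∘ ⇑e.symm) = (MeasurableEquiv.piCongrLeft (fun _ : ι => ℂ) e) x := by
    funext i
    simp [MeasurableEquiv.piCongrLeft, Equiv.piCongrLeft, Equiv.piCongrLeft']
  rw [this, hcon]



/-- index equiv for peeling one row off -/
def rowSumEquiv (N m : ℕ) : (Fin m ⊕ (Fin N × Fin m)) ≃ (Fin (N+1) × Fin m) where
  toFun := Sum.elim (fun j => (0, j)) (fun p => (p.1.succ, p.2))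
  invFun := fun p => Fin.cases (Sum.inl p.2) (fun i' => Sum.inr (i', p.2)) p.1
  left_inv := by rintro (j | ⟨i, j⟩) <;> simp
  right_inv := by rintro ⟨i, j⟩; induction i using Fin.cases <;> simp

/-- curry as a measurable equiv -/
def curryMEquiv (N m : ℕ) : ((Fin N × Fin m) → ℂ) ≃ᵐ (Fin N → Fin m → ℂ) where
  toEquiv := Equiv.curry _ _ _
  measurable_toFun := by
    refine measurable_pi_lambda _ (fun i => measurable_pi_lambda _ (fun j => ?_))
    exact measurable_pi_apply (i, j)
  measurable_invFun := by
    refine measurable_pi_lambda _ (fun p => ?_)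
    exact (measurable_pi_apply p.2).comp (measurable_pi_apply p.1)

lemma mp_curry : ∀ N m : ℕ, MeasurePreserving (curryMEquiv N m) volume volume := by
  intro N
  induction N with
  | zero =>
    intro m
    refine ⟨(curryMEquiv 0 m).measurable, ?_⟩
    have h1 : (volume : Measure ((Fin 0 × Fin m) → ℂ)) = Measure.dirac isEmptyElim := by
      exact Measure.pi_of_empty _
    have h2 : (volume : Measure (Fin 0 → Fin m → ℂ)) = Measure.dirac isEmptyElim := by
      exact Measure.pi_of_empty _
    rw [h1, h2, Measure.map_dirac' (curryMEquiv 0 m).measurable]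
    congr 1
    exact Subsingleton.elim _ _
  | succ N IH =>
    intro m
    set e₁ := (MeasurableEquiv.piCongrLeft (fun _ : Fin (N+1) × Fin m => ℂ) (rowSumEquiv N m)).symm
    set e₂ := MeasurableEquiv.sumPiEquivProdPi (fun _ : Fin m ⊕ (Fin N × Fin m) => ℂ)
    set e₃ := MeasurableEquiv.prodCongr (MeasurableEquiv.refl (Fin m → ℂ)) (curryMEquiv N m)
    set e₄ := (MeasurableEquiv.piFinSuccAbove (fun _ : Fin (N+1) => (Fin m → ℂ)) 0).symm
    have hp1 : MeasurePreserving e₁ volume volume :=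
      (volume_measurePreserving_piCongrLeft (fun _ => ℂ) (rowSumEquiv N m)).symm _
    have hp2 : MeasurePreserving e₂ volume volume := by
      have := (volume_measurePreserving_sumPiEquivProdPi_symm
        (fun _ : Fin m ⊕ (Fin N × Fin m) => ℂ)).symm e₂.symm
      simpa using this
    have hp3 : MeasurePreserving e₃ volume volume := by
      rw [Measure.volume_eq_prod, Measure.volume_eq_prod]
      exact (MeasurePreserving.id _).prod (IH m)
    have hp4 : MeasurePreserving e₄ volume volume :=
      (volume_preserving_piFinSuccAbove (fun _ : Fin (N+1) => (Fin m → ℂ)) 0).symm _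
    have hcomp := ((hp4.comp hp3).comp hp2).comp hp1
    have heq : ⇑(curryMEquiv (N+1) m) = ⇑e₄ ∘ ⇑e₃ ∘ ⇑e₂ ∘ ⇑e₁ := by
      funext g
      refine funext fun i => funext fun j => ?_
      show g (i, j) = e₄ (e₃ (e₂ (e₁ g))) i j
      induction i using Fin.cases with
      | zero =>
        simp [e₁, e₂, e₃, e₄, MeasurableEquiv.piFinSuccAbove, rowSumEquiv,
          MeasurableEquiv.piCongrLeft, Equiv.piCongrLeft, Equiv.piCongrLeft',
          MeasurableEquiv.sumPiEquivProdPi, Equiv.sumPiEquivProdPi,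
          Fin.insertNthEquiv, Fin.insertNth_zero, curryMEquiv, Equiv.curry,
          MeasurableEquiv.prodCongr, Function.curry]
      | succ i' =>
        simp [e₁, e₂, e₃, e₄, MeasurableEquiv.piFinSuccAbove, rowSumEquiv,
          MeasurableEquiv.piCongrLeft, Equiv.piCongrLeft, Equiv.piCongrLeft',
          MeasurableEquiv.sumPiEquivProdPi, Equiv.sumPiEquivProdPi,
          Fin.insertNthEquiv, Fin.insertNth_zero, curryMEquiv, Equiv.curry,
          MeasurableEquiv.prodCongr, Function.curry]
    exact heq ▸ hcomp

lemma curryMEquiv_apply (N m : ℕ) (g : (Fin N × Fin m) → ℂ) (i : Fin N) (j : Fin m) :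
    curryMEquiv N m g i j = g (i, j) := rfl


/-- If `n ≥ m₁m₂`, then for almost all `(D,E)` the matrix `G_{DE}`, whose column indexed by
`(j,k)` is `D^{(:,j)} ⊛ E^{(:,k)}`, has full column rank (linearly independent columns). -/
theorem blind_deconv_generic_full_column_rank {n m₁ m₂ : ℕ} (h : m₁ * m₂ ≤ n) :
    ∀ᵐ DE : (Fin n → Fin m₁ → ℂ) × (Fin n → Fin m₂ → ℂ) ∂volume,
      LinearIndependent ℂ
        (fun jk : Fin m₁ × Fin m₂ =>
          fun i => cconv (fun r => DE.1 r jk.1) (fun r => DE.2 r jk.2) i) := by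
  classical
  rcases Nat.eq_zero_or_pos (m₁ * m₂) with hm | hm
  · refine Filter.Eventually.of_forall fun DE => ?_
    haveI : IsEmpty (Fin m₁ × Fin m₂) := by
      rcases Nat.mul_eq_zero.mp hm with h1 | h1 <;> subst h1
      · exact ⟨fun p => p.1.elim0⟩
      · exact ⟨fun p => p.2.elim0⟩
    exact linearIndependent_empty_type
  haveI : NeZero n := ⟨by omega⟩
  -- index type for variables
  set ι := (Fin n × Fin m₁) ⊕ (Fin n × Fin m₂) with hι
  have hmul : ∀ jk : Fin m₁ × Fin m₂, (jk.2 : ℕ) + m₂ * (jk.1 : ℕ) < n := by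
    intro jk
    have := (finProdFinEquiv jk).is_lt
    simp only [finProdFinEquiv_apply_val] at this
    omega
  set ρ : Fin m₁ × Fin m₂ → Fin n :=
    fun jk => ⟨(jk.2 : ℕ) + m₂ * (jk.1 : ℕ), hmul jk⟩ with hρ
  have hρinj : Function.Injective ρ := by
    intro x y hxy
    have h1 : (finProdFinEquiv x : Fin (m₁ * m₂)) = finProdFinEquiv y := by
      apply Fin.ext
      simpa [finProdFinEquiv_apply_val, hρ, Fin.ext_iff] using hxy
    exact finProdFinEquiv.injective h1
  -- polynomial matrix
  set Mp : Matrix (Fin m₁ × Fin m₂) (Fin m₁ × Fin m₂) (MvPolynomial ι ℂ) :=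
    Matrix.of fun jk jk' => ∑ r : Fin n,
      MvPolynomial.X (Sum.inl (r, jk.1)) * MvPolynomial.X (Sum.inr (ρ jk' - r, jk.2)) with hMp
  have hEval : ∀ x : ι → ℂ, MvPolynomial.eval x Mp.det =
      Matrix.det (Matrix.of fun jk jk' : Fin m₁ × Fin m₂ =>
        cconv (fun r => x (Sum.inl (r, jk.1))) (fun r => x (Sum.inr (r, jk.2))) (ρ jk')) := by
    intro x
    rw [RingHom.map_det]
    congr 1
    ext jk jk'
    simp [hMp, cconv, Matrix.map_apply]
  -- witness
  set x₀ : ι → ℂ := Sum.elim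
      (fun p => if (p.1 : ℕ) = m₂ * (p.2 : ℕ) then 1 else 0)
      (fun p => if (p.1 : ℕ) = (p.2 : ℕ) then 1 else 0) with hx₀
  have hW : MvPolynomial.eval x₀ Mp.det = 1 := by
    rw [hEval]
    have hA : (Matrix.of fun jk jk' : Fin m₁ × Fin m₂ =>
        cconv (fun r => x₀ (Sum.inl (r, jk.1))) (fun r => x₀ (Sum.inr (r, jk.2))) (ρ jk'))
        = (1 : Matrix (Fin m₁ × Fin m₂) (Fin m₁ × Fin m₂) ℂ) := by
      ext jk jk'
      set a : Fin n := ⟨m₂ * (jk.1 : ℕ), by have := hmul jk; omega⟩ with ha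
      set b : Fin n := ⟨(jk.2 : ℕ), by have := hmul jk; omega⟩ with hb
      have hcc : cconv (fun r => x₀ (Sum.inl (r, jk.1))) (fun r => x₀ (Sum.inr (r, jk.2)))
          (ρ jk') = if ρ jk' - a = b then 1 else 0 := by
        rw [cconv, Finset.sum_eq_single a]
        · simp [hx₀, ha, hb, Fin.ext_iff]
        · intro r _ hr
          have : ¬ ((r : ℕ) = m₂ * (jk.1 : ℕ)) := by
            intro hc; exact hr (Fin.ext (by simpa [ha] using hc))
          simp [hx₀, this]
        · intro hcon; exact absurd (Finset.mem_univ a) hcon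
      simp only [Matrix.of_apply]
      rw [hcc]
      have hba : b + a = ρ jk := by
        apply Fin.ext
        have h1 : ((jk.2 : ℕ) + m₂ * (jk.1 : ℕ)) < n := hmul jk
        simp [Fin.add_def, ha, hb, hρ, Nat.mod_eq_of_lt h1]
      have hiff : (ρ jk' - a = b) ↔ (jk = jk') := by
        rw [sub_eq_iff_eq_add, hba]
        constructor
        · intro hc; exact (hρinj hc).symm
        · intro hc; rw [hc]
      rw [Matrix.one_apply]
      simp only [hiff]
    rw [hA, Matrix.det_one]
  have hp0 : Mp.det ≠ 0 := by
    intro hz; rw [hz] at hW; simp at hW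
  -- measure-preserving transfer
  set Φ : (ι → ℂ) ≃ᵐ ((Fin n → Fin m₁ → ℂ) × (Fin n → Fin m₂ → ℂ)) :=
    (MeasurableEquiv.sumPiEquivProdPi (fun _ : ι => ℂ)).trans
      ((curryMEquiv n m₁).prodCongr (curryMEquiv n m₂)) with hΦdef
  have hΦ : MeasurePreserving Φ volume volume := by
    have h1 : MeasurePreserving (MeasurableEquiv.sumPiEquivProdPi (fun _ : ι => ℂ))
        volume volume := by
      have := (volume_measurePreserving_sumPiEquivProdPi_symm (fun _ : ι => ℂ)).symm
        (MeasurableEquiv.sumPiEquivProdPi (fun _ : ι => ℂ)).symm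
      simpa using this
    have h2 : MeasurePreserving ((curryMEquiv n m₁).prodCongr (curryMEquiv n m₂))
        volume volume := by
      have := (mp_curry n m₁).prod (mp_curry n m₂)
      rw [← Measure.volume_eq_prod, ← Measure.volume_eq_prod] at this
      exact this
    exact h2.comp h1
  refine ae_of_ae_comp Φ hΦ ?_
  filter_upwards [ae_eval_ne_zero Mp.det hp0] with x hx
  -- identify Φ x
  have hΦx1 : ∀ r j, (Φ x).1 r j = x (Sum.inl (r, j)) := by
    intro r j
    show (curryMEquiv n m₁) (fun p => x (Sum.inl p)) r j = _
    rw [curryMEquiv_apply]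
  have hΦx2 : ∀ r k, (Φ x).2 r k = x (Sum.inr (r, k)) := by
    intro r k
    show (curryMEquiv n m₂) (fun p => x (Sum.inr p)) r k = _
    rw [curryMEquiv_apply]
  rw [hEval] at hx
  have hdet : (Matrix.of fun jk jk' : Fin m₁ × Fin m₂ =>
      cconv (fun r => (Φ x).1 r jk.1) (fun r => (Φ x).2 r jk.2) (ρ jk')).det ≠ 0 := by
    have hfun : (Matrix.of fun jk jk' : Fin m₁ × Fin m₂ =>
        cconv (fun r => (Φ x).1 r jk.1) (fun r => (Φ x).2 r jk.2) (ρ jk'))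
        = (Matrix.of fun jk jk' : Fin m₁ × Fin m₂ =>
        cconv (fun r => x (Sum.inl (r, jk.1))) (fun r => x (Sum.inr (r, jk.2))) (ρ jk')) := by
      funext jk jk'
      simp only [Matrix.of_apply, cconv]
      refine Finset.sum_congr rfl fun r _ => ?_
      rw [hΦx1, hΦx2]
    rw [hfun]
    exact hx
  have hu : IsUnit (Matrix.of fun jk jk' : Fin m₁ × Fin m₂ =>
      cconv (fun r => (Φ x).1 r jk.1) (fun r => (Φ x).2 r jk.2) (ρ jk')) :=
    (Matrix.isUnit_iff_isUnit_det _).mpr (isUnit_iff_ne_zero.mpr hdet)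
  have hli := Matrix.linearIndependent_rows_iff_isUnit.mpr hu
  apply LinearIndependent.of_comp (LinearMap.funLeft ℂ ℂ ρ)
  exact hli
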